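/- For every real p > 1, every nonzero real T, and all integers r ≥ 1, c ≥ 1, t ≥ 1: ∑_{b ∈ {1,…,r+1}^c} μ_p(r+1; b) · T^{−t·min{r+1, b_1, …, b_c}} = T^{−t} · ∑_{b ∈ {1,…,r}^c} μ_p(r; b) · T^{−t·min{r, b_1, …, b_c}} + T^{−t} · p^{cr} (1 − p^{−c}). -/

import Mathlib

open Finset

noncomputable section

/-- `μ_p(a,b)`: the measure of elements of `pℤ_p/(p^a)` of valuation `b` (for `1 ≤ b ≤ a`). -/
def mu (p : ℝ) (a b : ℕ) : ℝ := if b = a then 1 else p ^ (a - b) * (1 - p⁻¹)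

/-- `μ_p(a; b) = ∏_j μ_p(a, b_j)` for a tuple `b`. -/
def muV (p : ℝ) (a : ℕ) {k : ℕ} (b : Fin k → ℕ) : ℝ := ∏ j, mu p a (b j)

/-- `mins r f = min{r, f 0, …, f (k-1)}`. -/
def mins (r : ℕ) {k : ℕ} (f : Fin k → ℕ) : ℕ := (List.ofFn f).foldr min r

lemma mu_succ (p : ℝ) {a b : ℕ} (hba : b ≤ a) :
    mu p (a + 1) (b + 1) = mu p a b := by
  unfold mu
  rcases eq_or_lt_of_le hba with h | h
  · simp [h]
  · rw [if_neg (by omega), if_neg (by omega)]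
    congr 2
    omega

lemma sum_mu (p : ℝ) (hp : 1 < p) (n : ℕ) :
    ∑ b ∈ Icc 1 (n + 1), mu p (n + 1) b = p ^ n := by
  have hp0 : p ≠ 0 := by positivity
  have hp1 : p - 1 ≠ 0 := by intro h; nlinarith
  rw [Finset.sum_Icc_succ_top (by omega)]
  have h1 : ∀ b ∈ Icc 1 n, mu p (n + 1) b = p ^ (n + 1 - b) * (1 - p⁻¹) := by
    intro b hb
    simp only [mem_Icc] at hb
    rw [mu, if_neg (by omega)]
  rw [Finset.sum_congr rfl h1, mu, if_pos rfl]
  have h2 : ∑ b ∈ Icc 1 n, p ^ (n + 1 - b) * (1 - p⁻¹)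
      = ∑ i ∈ Finset.range n, p ^ (n - i) * (1 - p⁻¹) := by
    rw [← Finset.Ico_add_one_right_eq_Icc, Finset.sum_Ico_eq_sum_range]
    apply Finset.sum_congr (by congr 1)
    intro i _
    congr 2
    omega
  have h3 : ∑ i ∈ Finset.range n, p ^ (n - i) * (1 - p⁻¹)
      = ∑ i ∈ Finset.range n, p ^ (i + 1) * (1 - p⁻¹) := by
    rw [← Finset.sum_range_reflect]
    apply Finset.sum_congr rfl
    intro i hi
    simp only [Finset.mem_range] at hi
    congr 2
    omega
  have hgeom : ∑ i ∈ Finset.range n, p ^ i = (p ^ n - 1) / (p - 1) :=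
    geom_sum_eq (by intro h; exact hp1 (by rw [h]; ring)) n
  have h4 : ∑ i ∈ Finset.range n, p ^ (i + 1) * (1 - p⁻¹)
      = (∑ i ∈ Finset.range n, p ^ i) * (p * (1 - p⁻¹)) := by
    rw [Finset.sum_mul]
    apply Finset.sum_congr rfl
    intro i _
    ring
  rw [h2, h3, h4, hgeom]
  field_simp
  ring

lemma foldr_min_succ (l : List ℕ) (r : ℕ) :
    (l.map (· + 1)).foldr min (r + 1) = l.foldr min r + 1 := by
  induction l with
  | nil => simp
  | cons a l ih => simp [ih, Nat.succ_min_succ]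

lemma foldr_min_le_mem (l : List ℕ) (r : ℕ) {x : ℕ} (hx : x ∈ l) : l.foldr min r ≤ x := by
  induction l with
  | nil => simp at hx
  | cons a l ih =>
    rcases List.mem_cons.1 hx with h | h
    · subst h; exact min_le_left _ _
    · exact le_trans (min_le_right _ _) (ih h)

lemma le_foldr_min (l : List ℕ) (r m : ℕ) (hr : m ≤ r) (h : ∀ x ∈ l, m ≤ x) :
    m ≤ l.foldr min r := by
  induction l with
  | nil => simpa
  | cons a l ih =>
    simp only [List.foldr_cons, le_min_iff]
    exact ⟨h a (by simp), ih fun x hx => h x (List.mem_cons_of_mem _ hx)⟩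

lemma mins_succ {c : ℕ} (r : ℕ) (f : Fin c → ℕ) :
    mins (r + 1) (fun j => f j + 1) = mins r f + 1 := by
  unfold mins
  rw [show List.ofFn (fun j => f j + 1) = (List.ofFn f).map (· + 1) by
    rw [List.map_ofFn]; rfl]
  exact foldr_min_succ _ _

lemma mins_eq_one {c : ℕ} (r : ℕ) (hr : 1 ≤ r) (f : Fin c → ℕ)
    (h1 : ∀ j, 1 ≤ f j) (j0 : Fin c) (hj0 : f j0 = 1) : mins r f = 1 := by
  have hle : mins r f ≤ 1 := by
    rw [← hj0]
    exact foldr_min_le_mem _ _ ((List.mem_ofFn).2 ⟨j0, rfl⟩)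
  have hge : 1 ≤ mins r f := by
    apply le_foldr_min _ _ _ hr
    intro x hx
    obtain ⟨j, rfl⟩ := (List.mem_ofFn).1 hx
    exact h1 j
  omega

lemma sum_mu_shift (p : ℝ) (hp : 1 < p) (m : ℕ) :
    ∑ b ∈ Icc 2 (m + 2), mu p (m + 2) b = p ^ m := by
  have : ∑ b ∈ Icc 2 (m + 2), mu p (m + 2) b = ∑ b ∈ Icc 1 (m + 1), mu p (m + 1) b := by
    rw [← Finset.Ico_add_one_right_eq_Icc, ← Finset.Ico_add_one_right_eq_Icc,
      Finset.sum_Ico_eq_sum_range, Finset.sum_Ico_eq_sum_range]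
    apply Finset.sum_congr (by congr 1)
    intro i hi
    simp only [Finset.mem_range] at hi
    rw [show 2 + i = (1 + i) + 1 by omega, mu_succ p (by omega)]
  rw [this, sum_mu p hp]

theorem shifting_lemma (p T : ℝ) (hp : 1 < p) (hT : T ≠ 0) (r c t : ℕ)
    (hr : 1 ≤ r) (hc : 1 ≤ c) (ht : 1 ≤ t) :
    ∑ b ∈ Fintype.piFinset (fun _ : Fin c => Icc 1 (r + 1)),
        muV p (r + 1) b * T ^ (-(t * mins (r + 1) b : ℤ)) =
      T ^ (-(t : ℤ)) *
          ∑ b ∈ Fintype.piFinset (fun _ : Fin c => Icc 1 r),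
            muV p r b * T ^ (-(t * mins r b : ℤ)) +
        T ^ (-(t : ℤ)) * p ^ (c * r) * (1 - ((p : ℝ) ^ c)⁻¹) := by
  classical
  obtain ⟨m, rfl⟩ : ∃ m, r = m + 1 := ⟨r - 1, by omega⟩
  have hp0 : (0 : ℝ) < p := by linarith
  set A := Fintype.piFinset (fun _ : Fin c => Icc 1 (m + 2)) with hA
  set B := Fintype.piFinset (fun _ : Fin c => Icc 2 (m + 2)) with hB
  set C := Fintype.piFinset (fun _ : Fin c => Icc 1 (m + 1)) with hC
  have hfilter : A.filter (fun b => ∀ j, 2 ≤ b j) = B := by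
    ext b
    simp only [hA, hB, mem_filter, Fintype.mem_piFinset, mem_Icc]
    constructor
    · rintro ⟨h1, h2⟩ j; exact ⟨h2 j, (h1 j).2⟩
    · intro h; exact ⟨fun j => ⟨by have := (h j).1; omega, (h j).2⟩, fun j => (h j).1⟩
  -- the shifted main sum
  have key : ∑ b ∈ B, muV p (m + 2) b * T ^ (-(t * mins (m + 2) b : ℤ)) =
      ∑ b ∈ C, T ^ (-(t : ℤ)) * (muV p (m + 1) b * T ^ (-(t * mins (m + 1) b : ℤ))) := by
    refine Finset.sum_nbij' (i := fun b j => b j - 1) (j := fun b j => b j + 1)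
      ?_ ?_ ?_ ?_ ?_
    · intro b hb
      simp only [hB, Fintype.mem_piFinset, mem_Icc] at hb
      simp only [hC, Fintype.mem_piFinset, mem_Icc]
      intro j; have := hb j; omega
    · intro b hb
      simp only [hC, Fintype.mem_piFinset, mem_Icc] at hb
      simp only [hB, Fintype.mem_piFinset, mem_Icc]
      intro j; have := hb j; omega
    · intro b hb
      simp only [hB, Fintype.mem_piFinset, mem_Icc] at hb
      funext j
      show (b j - 1) + 1 = b j
      have := hb j; omega
    · intro b hb
      funext j
      show (b j + 1) - 1 = b j
      omega
    · intro b hb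
      simp only [hB, Fintype.mem_piFinset, mem_Icc] at hb
      have hbe : b = fun j => (b j - 1) + 1 := by
        funext j; have := hb j; omega
      have hmu : muV p (m + 2) b = muV p (m + 1) (fun j => b j - 1) := by
        unfold muV
        apply Finset.prod_congr rfl
        intro j _
        have := hb j
        rw [show b j = (b j - 1) + 1 by omega, mu_succ p (by omega)]
      have hmin : mins (m + 2) b = mins (m + 1) (fun j => b j - 1) + 1 := by
        conv_lhs => rw [hbe]
        exact mins_succ _ _
      rw [hmu, hmin]
      push_cast
      beta_reduce
      have hc2 : (-((t : ℤ) * ((mins (m + 1) (fun j => b j - 1) : ℤ) + 1))) =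
          (-(t : ℤ)) + (-((t : ℤ) * (mins (m + 1) (fun j => b j - 1) : ℤ))) := by ring
      rw [hc2, zpow_add₀ hT]
      ring
  -- sum of muV over A and B
  have hsumA : ∑ b ∈ A, muV p (m + 2) b = p ^ (c * (m + 1)) := by
    unfold muV
    rw [hA, ← Finset.prod_univ_sum]
    rw [Finset.prod_congr rfl fun j _ => sum_mu p hp (m + 1)]
    rw [Finset.prod_const, ← pow_mul]
    congr 1
    simp [Nat.mul_comm]
  have hsumB : ∑ b ∈ B, muV p (m + 2) b = p ^ (c * m) := by
    unfold muV
    rw [hB, ← Finset.prod_univ_sum]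
    rw [Finset.prod_congr rfl fun j _ => sum_mu_shift p hp m]
    rw [Finset.prod_const, ← pow_mul]
    congr 1
    simp [Nat.mul_comm]
  -- split the sum over A
  rw [← Finset.sum_filter_add_sum_filter_not A (fun b => ∀ j, 2 ≤ b j), hfilter, key]
  have hnot : ∑ b ∈ A.filter (fun b => ¬ ∀ j, 2 ≤ b j),
      muV p (m + 2) b * T ^ (-(t * mins (m + 2) b : ℤ)) =
      (∑ b ∈ A.filter (fun b => ¬ ∀ j, 2 ≤ b j), muV p (m + 2) b) * T ^ (-(t : ℤ)) := by
    rw [Finset.sum_mul]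
    apply Finset.sum_congr rfl
    intro b hb
    simp only [hA, mem_filter, Fintype.mem_piFinset, mem_Icc, not_forall] at hb
    obtain ⟨h1, j0, hj0⟩ := hb
    have hmin : mins (m + 2) b = 1 := by
      apply mins_eq_one _ (by omega) _ (fun j => (h1 j).1) j0
      have := (h1 j0).1
      omega
    rw [hmin]
    norm_num
  have hsplit : ∑ b ∈ A.filter (fun b => ¬ ∀ j, 2 ≤ b j), muV p (m + 2) b
      = p ^ (c * (m + 1)) - p ^ (c * m) := by
    have := Finset.sum_filter_add_sum_filter_not A (fun b => ∀ j, 2 ≤ b j)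
      (muV p (m + 2))
    rw [hfilter, hsumB] at this
    rw [← hsumA, ← this]
    ring
  rw [hnot, hsplit, ← Finset.mul_sum]
  have hpow : (p : ℝ) ^ (c * (m + 1)) * ((p : ℝ) ^ c)⁻¹ = p ^ (c * m) := by
    have hpc : ((p : ℝ) ^ c) ≠ 0 := by positivity
    rw [show c * (m + 1) = c * m + c by ring, pow_add]
    field_simp
  linear_combination (T ^ (-(t : ℤ))) * hpow
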